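/- arXiv:2210.04160 — 4 statements merged into one kernel-verified Lean document; each statement's English description precedes it below -/
import Mathlib

section
/- Let t ≥ 2 and b be an integer with 0 ≤ b < t², b ≠ t², and suppose s = b − t² + t²(t−1)²/(b − t²) + 2t² − t (equivalently s(b−t²) = b² − tb − t³ + t²). Then s ≤ t. -/
/-- Let `t ≥ 2` and `0 ≤ b < t²` with `s(b − t²) = b² − tb − t³ + t²`
(equivalently `s = b − t² + t²(t−1)²/(b − t²) + 2t² − t`). Then `s ≤ t`. -/
theorem stmt_5 (t b s : ℝ) (ht : 2 ≤ t) (hb0 : 0 ≤ b) (hbt : b < t ^ 2)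
    (hbne : b ≠ t ^ 2)
    (hs : s * (b - t ^ 2) = b ^ 2 - t * b - t ^ 3 + t ^ 2) :
    s ≤ t := by
  nlinarith [sq_nonneg (b - t), mul_pos (sub_pos.2 hbt) (sub_pos.2 hbt)]
end

section
/- Let s ≥ t ≥ 2, μ = −1, and let a, b be integers with 0 ≤ a ≤ t, 0 ≤ b ≤ s, (a,b) ≠ (0,0). If (1 − ts)(a + b − 1) + a²s + tb² − 2ab = 0 and 1 − ts + a(s−1) + b(t−1) = 0, then (a,b) = (1,s) or (a,b) = (t,1). -/
/-- Let `s ≥ t ≥ 2`, `μ = −1`, and `a, b` integers with `0 ≤ a ≤ t`, `0 ≤ b ≤ s`,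
`(a,b) ≠ (0,0)`. If `(1 − ts)(a + b − 1) + a²s + tb² − 2ab = 0` and
`1 − ts + a(s−1) + b(t−1) = 0`, then `(a,b) = (1,s)` or `(a,b) = (t,1)`. -/
theorem stmt_6 (t s a b : ℤ) (ht : 2 ≤ t) (hts : t ≤ s)
    (ha0 : 0 ≤ a) (hat : a ≤ t) (hb0 : 0 ≤ b) (hbs : b ≤ s)
    (hab : (a, b) ≠ (0, 0))
    (h1 : (1 - t * s) * (a + b - 1) + a ^ 2 * s + t * b ^ 2 - 2 * a * b = 0)
    (h2 : 1 - t * s + a * (s - 1) + b * (t - 1) = 0) :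
    (a, b) = (1, s) ∨ (a, b) = (t, 1) := by
  have hs : 2 ≤ s := le_trans ht hts
  -- a ≥ 1
  have ha1 : 1 ≤ a := by
    by_contra h
    have ha : a = 0 := by omega
    subst ha
    have hb1 : 1 ≤ b := by
      rcases lt_or_eq_of_le hb0 with h' | h'
      · omega
      · exact absurd (by rw [← h']) hab
    nlinarith [mul_nonneg (sub_nonneg.mpr hbs) (by omega : (0:ℤ) ≤ t - 1)]
  -- b ≥ 1
  have hb1 : 1 ≤ b := by
    by_contra h
    have hb : b = 0 := by omega
    subst hb
    nlinarith [mul_nonneg (sub_nonneg.mpr hat) (by omega : (0:ℤ) ≤ s - 1)]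
  rcases eq_or_lt_of_le ha1 with ha1' | ha2
  · -- a = 1, show b = s
    left
    subst ha1'
    have hbeq : b * (t - 1) = s * (t - 1) := by linear_combination h2
    have : b = s := by
      have ht1 : t - 1 ≠ 0 := by omega
      exact mul_right_cancel₀ ht1 hbeq
    simp [this]
  rcases eq_or_lt_of_le hb1 with hb1' | hb2
  · -- b = 1, show a = t
    right
    subst hb1'
    have haeq : a * (s - 1) = t * (s - 1) := by linear_combination h2
    have : a = t := by
      have hs1 : s - 1 ≠ 0 := by omega
      exact mul_right_cancel₀ hs1 haeq
    simp [this]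
  -- now 2 ≤ a, 2 ≤ b : derive a contradiction
  exfalso
  have ha2' : 2 ≤ a := ha2
  have hb2' : 2 ≤ b := hb2
  -- (t-a)(s-1) = (b-1)(t-1) > 0, so t > a
  have hL1 : (t - a) * (s - 1) = (b - 1) * (t - 1) := by linear_combination -h2
  have hta : a < t := by
    nlinarith [mul_pos (by omega : (0:ℤ) < b - 1) (by omega : (0:ℤ) < t - 1)]
  -- (s-b)(t-1) = (a-1)(s-1) > 0, so s > b
  have hL2 : (s - b) * (t - 1) = (a - 1) * (s - 1) := by linear_combination -h2
  have hsb : b < s := by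
    nlinarith [mul_pos (by omega : (0:ℤ) < a - 1) (by omega : (0:ℤ) < s - 1)]
  -- key identity: sum of three positive terms is zero
  have key : (t - a) * b * (a - 1) + (s - b) * a * (b - 1)
      + (a - 1) * (b - 1) * (a + b) = 0 := by
    linear_combination -h1 + (a + b - 1) * h2
  have t1 : 0 < (t - a) * b * (a - 1) :=
    mul_pos (mul_pos (by omega) (by omega)) (by omega)
  have t2 : 0 < (s - b) * a * (b - 1) :=
    mul_pos (mul_pos (by omega) (by omega)) (by omega)
  have t3 : 0 < (a - 1) * (b - 1) * (a + b) :=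
    mul_pos (mul_pos (by omega) (by omega)) (by omega)
  linarith
end

section
/- Let μ be a nonzero real number, t a positive integer, and a, b real numbers with μ ∉ {0, −1, −t}, satisfying μ²(a+b) + μ(as + tb) = −μ(μ² − ts) and (μ² − ts)(a+b) + a²s + tb² + 2abμ = μ²(μ² − ts), with μ² ≠ ts, a ≠ −μ, and 0 ≤ a ≤ t−1. Then b = (μ³ + tμ² − ta + a²)/(μ + a). -/
/-- Lemma 3.7: if `μ ∉ {0, −1, −t}`, a vertex of type `(a,b)` with `0 ≤ a ≤ t−1`,
`a ≠ −μ`, satisfying equations (5) and (6) with `μ² ≠ ts`, has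
`b = (μ³ + tμ² − ta + a²)/(μ + a)`. -/
theorem stmt_9 (t : ℕ) (ht : 0 < t) (μ s a b : ℝ)
    (hμ0 : μ ≠ 0) (hμ1 : μ ≠ -1) (hμt : μ ≠ -(t : ℝ))
    (h1 : μ ^ 2 * (a + b) + μ * (a * s + (t : ℝ) * b) = -μ * (μ ^ 2 - (t : ℝ) * s))
    (h2 : (μ ^ 2 - (t : ℝ) * s) * (a + b) + a ^ 2 * s + (t : ℝ) * b ^ 2 + 2 * a * b * μ
      = μ ^ 2 * (μ ^ 2 - (t : ℝ) * s))
    (hts : μ ^ 2 ≠ (t : ℝ) * s)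
    (ha : a ≠ -μ) (ha0 : 0 ≤ a) (hat : a ≤ (t : ℝ) - 1) :
    b = (μ ^ 3 + (t : ℝ) * μ ^ 2 - (t : ℝ) * a + a ^ 2) / (μ + a) := by
  have hμa : μ + a ≠ 0 := fun h => ha (by linarith)
  by_cases hc : (t : ℝ) * b + μ * a = 0
  · exfalso
    have key0 : μ * (((t : ℝ) - a) * (μ ^ 2 - (t : ℝ) * s)) = 0 := by
      linear_combination (t : ℝ) * h1 - (μ * (μ + (t : ℝ))) * hc
    have key : ((t : ℝ) - a) * (μ ^ 2 - (t : ℝ) * s) = 0 :=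
      (mul_eq_zero.mp key0).resolve_left hμ0
    have hta : (t : ℝ) - a ≠ 0 := by
      have : (1 : ℝ) ≤ t - a := by linarith
      linarith
    exact hts (by have := mul_eq_zero.mp key; rcases this with h | h
                  · exact absurd h hta
                  · linarith)
  · have key : ((t : ℝ) * b + μ * a) *
        (b * (μ + a) - (μ ^ 3 + (t : ℝ) * μ ^ 2 - (t : ℝ) * a + a ^ 2)) = 0 := by
      have key0 : μ * (((t : ℝ) * b + μ * a) *
          (b * (μ + a) - (μ ^ 3 + (t : ℝ) * μ ^ 2 - (t : ℝ) * a + a ^ 2))) = 0 := by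
        linear_combination (μ * (a - (t : ℝ))) * h2 -
          (a ^ 2 + (t : ℝ) * μ ^ 2 - (t : ℝ) * (a + b)) * h1
      exact (mul_eq_zero.mp key0).resolve_left hμ0
    rcases mul_eq_zero.mp key with h | h
    · exact absurd h hc
    · field_simp
      linarith
end

section
/- Let s ≥ 2 and μ be a real number with μ ∉ {−1,0}, μ ≠ ±s, and let a, b be integers with 0 ≤ a,b ≤ s, (a,b) ≠ (0,0), satisfying μ²(a+b) + μs(a+b) = −μ(μ² − s²) and (μ² − s²)(a+b) + s(a² + b²) + 2abμ = μ²(μ² − s²). Then a + b = s − μ, and {a, b} = {x₁, x₂} where x₁,₂ = (s − μ ± √((s−μ²)² − (μ²+μ)²))/2; in particular μ ∈ ℤ and |μ| < s. -/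
/-- Proposition 5.1(1): with `t = s` in equations (5) and (6), a vertex of type `(a,b)`
for a non-main eigenvalue `μ ∉ {−1, 0}`, `μ ≠ ±s`, of `K_{s,s}` satisfies `a + b = s − μ`,
`{a, b} = {x₁, x₂}` with `x₁,₂ = (s − μ ± √((s−μ²)² − (μ²+μ)²))/2`; in particular
`μ ∈ ℤ` and `|μ| < s`. -/
theorem stmt_15 (s a b : ℤ) (μ : ℝ) (hs : 2 ≤ s)
    (hμ1 : μ ≠ -1) (hμ0 : μ ≠ 0) (hμs : μ ≠ (s : ℝ)) (hμs' : μ ≠ -(s : ℝ))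
    (ha0 : 0 ≤ a) (has : a ≤ s) (hb0 : 0 ≤ b) (hbs : b ≤ s) (hab : (a, b) ≠ (0, 0))
    (h1 : μ ^ 2 * ((a : ℝ) + b) + μ * (s : ℝ) * ((a : ℝ) + b) = -μ * (μ ^ 2 - (s : ℝ) ^ 2))
    (h2 : (μ ^ 2 - (s : ℝ) ^ 2) * ((a : ℝ) + b) + (s : ℝ) * ((a : ℝ) ^ 2 + (b : ℝ) ^ 2)
        + 2 * a * b * μ = μ ^ 2 * (μ ^ 2 - (s : ℝ) ^ 2)) :
    (a : ℝ) + b = (s : ℝ) - μ ∧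
    (((a : ℝ) = ((s : ℝ) - μ + Real.sqrt (((s : ℝ) - μ ^ 2) ^ 2 - (μ ^ 2 + μ) ^ 2)) / 2 ∧
        (b : ℝ) = ((s : ℝ) - μ - Real.sqrt (((s : ℝ) - μ ^ 2) ^ 2 - (μ ^ 2 + μ) ^ 2)) / 2) ∨
      ((a : ℝ) = ((s : ℝ) - μ - Real.sqrt (((s : ℝ) - μ ^ 2) ^ 2 - (μ ^ 2 + μ) ^ 2)) / 2 ∧
        (b : ℝ) = ((s : ℝ) - μ + Real.sqrt (((s : ℝ) - μ ^ 2) ^ 2 - (μ ^ 2 + μ) ^ 2)) / 2)) ∧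
    (∃ m : ℤ, μ = (m : ℝ)) ∧ |μ| < (s : ℝ) := by
  -- a + b ≥ 1
  have hab1 : 1 ≤ a + b := by
    rcases lt_or_ge 0 a with h | h
    · omega
    · have : a = 0 := le_antisymm h ha0
      have : b ≠ 0 := fun hb => hab (by simp [this, hb])
      omega
  have hab1' : (1 : ℝ) ≤ (a : ℝ) + b := by exact_mod_cast (by exact_mod_cast hab1 : (1:ℤ) ≤ a + b)
  -- sum
  have hsum : (a : ℝ) + b = (s : ℝ) - μ := by
    have hms : μ + (s : ℝ) ≠ 0 := fun h => hμs' (by linarith)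
    have h1' : μ * ((μ + s) * ((a : ℝ) + b) - ((s : ℝ) - μ) * ((s : ℝ) + μ)) = 0 := by
      ring_nf
      ring_nf at h1
      linarith
    have h1'' := (mul_eq_zero.mp h1').resolve_left hμ0
    have h1''' : (μ + (s : ℝ)) * ((a : ℝ) + b) = (μ + (s : ℝ)) * ((s : ℝ) - μ) := by linarith [sub_eq_zero.mp h1'']
    exact mul_left_cancel₀ hms h1'''
  -- μ = s - (a+b)
  have hμeq : μ = (s : ℝ) - ((a : ℝ) + b) := by linarith
  refine ⟨hsum, ?_, ⟨s - a - b, by push_cast; linarith⟩, ?_⟩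
  · -- key discriminant identity
    have habne : (a : ℝ) + b ≠ 0 := by linarith
    have key : ((s : ℝ) - μ ^ 2) ^ 2 - (μ ^ 2 + μ) ^ 2 = ((a : ℝ) - b) ^ 2 := by
      have hmul : ((a : ℝ) + b) *
          ((((s : ℝ) - μ ^ 2) ^ 2 - (μ ^ 2 + μ) ^ 2) - ((a : ℝ) - b) ^ 2) = 0 := by
        rw [hμeq] at h2 ⊢
        linear_combination (-2 : ℝ) * h2
      have := (mul_eq_zero.mp hmul).resolve_left habne
      linarith
    rw [key, Real.sqrt_sq_eq_abs]
    rcases le_total b a with h | h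
    · left
      have habs : |(a : ℝ) - b| = (a : ℝ) - b := abs_of_nonneg (by exact_mod_cast sub_nonneg.mpr h)
      constructor <;> rw [habs] <;> linarith
    · right
      have habs : |(a : ℝ) - b| = (b : ℝ) - a := by
        rw [abs_sub_comm]
        exact abs_of_nonneg (by exact_mod_cast sub_nonneg.mpr h)
      constructor <;> rw [habs] <;> linarith
  · -- |μ| < s
    have h2s : a + b < 2 * s := by
      by_contra h
      push_neg at h
      have : a + b = 2 * s := by omega
      apply hμs'
      have : ((a : ℝ) + b) = 2 * s := by exact_mod_cast this
      linarith
    have h2s' : (a : ℝ) + b < 2 * s := by exact_mod_cast (by exact_mod_cast h2s : ((a+b : ℤ) : ℝ) < ((2*s : ℤ) : ℝ))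
    rw [abs_lt]
    constructor <;> linarith
end
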